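/- (Lagrange-multiplier representation of the empirical likelihood) Let θ ∈ ℝ^d and suppose λ ∈ ℝ^d satisfies 1 + λᵀ(X_i − θ) > 0 for every i = 1, …, n and Σ_{i=1}^n (X_i − θ)/(1 + λᵀ(X_i − θ)) = 0. Then the weights w_i = 1/(n(1 + λᵀ(X_i − θ))) belong to W(θ) and maximize ∏_{i=1}^n n·w_i over W(θ), so that R(θ) = ∏_{i=1}^n (1 + λᵀ(X_i − θ))^{-1}; equivalently, l(θ) = −2·log R(θ) = 2·Σ_{i=1}^n log(1 + λᵀ(X_i − θ)). -/

import Mathlib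

noncomputable section

/-- The set of empirical likelihood weight vectors for `θ`:
`W(θ) = {w : wᵢ ≥ 0, Σ wᵢ = 1, Σ wᵢ Xᵢ = θ}`. -/
def Wset (n d : ℕ) (X : Fin n → EuclideanSpace ℝ (Fin d))
    (θ : EuclideanSpace ℝ (Fin d)) : Set (Fin n → ℝ) :=
  {w | (∀ i, 0 ≤ w i) ∧ ∑ i, w i = 1 ∧ ∑ i, w i • X i = θ}

/-- The empirical likelihood ratio `R(θ) = sup {∏ n·wᵢ : w ∈ W(θ)}` (the sup over
the empty set is `0`, since `Real.sSup ∅ = 0`). -/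
def elR (n d : ℕ) (X : Fin n → EuclideanSpace ℝ (Fin d))
    (θ : EuclideanSpace ℝ (Fin d)) : ℝ :=
  sSup ((fun w => ∏ i, (n : ℝ) * w i) '' Wset n d X θ)

/-- The empirical log-likelihood ratio `l(θ) = -2 log R(θ)`. -/
def elln (n d : ℕ) (X : Fin n → EuclideanSpace ℝ (Fin d))
    (θ : EuclideanSpace ℝ (Fin d)) : ℝ :=
  -2 * Real.log (elR n d X θ)

/-- The sample mean `θ̃ = n⁻¹ Σ Xᵢ`. -/
def sampleMean (n d : ℕ) (X : Fin n → EuclideanSpace ℝ (Fin d)) :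
    EuclideanSpace ℝ (Fin d) :=
  (n : ℝ)⁻¹ • ∑ i, X i

/-- The composite similarity mapping `h(θ) = θ̃ + (1 + l(θ)/(2n))(θ - θ̃)`. -/
def csm (n d : ℕ) (X : Fin n → EuclideanSpace ℝ (Fin d))
    (θ : EuclideanSpace ℝ (Fin d)) : EuclideanSpace ℝ (Fin d) :=
  sampleMean n d X + (1 + elln n d X θ / (2 * n)) • (θ - sampleMean n d X)

open scoped RealInnerProductSpace in
/-- Lagrange-multiplier representation: If `λ ∈ ℝᵈ` satisfies
`1 + λᵀ(Xᵢ - θ) > 0` for all `i` and `Σᵢ (Xᵢ - θ)/(1 + λᵀ(Xᵢ - θ)) = 0`, then the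
weights `wᵢ = 1/(n(1 + λᵀ(Xᵢ - θ)))` lie in `W(θ)` and maximize `∏ n·wᵢ` over `W(θ)`,
so that `R(θ) = ∏ (1 + λᵀ(Xᵢ - θ))⁻¹` and `l(θ) = 2 Σ log(1 + λᵀ(Xᵢ - θ))`. -/
theorem stmt15 (n d : ℕ) (hn : 0 < n) (hd : 0 < d)
    (X : Fin n → EuclideanSpace ℝ (Fin d))
    (θ lam : EuclideanSpace ℝ (Fin d))
    (hpos : ∀ i, 0 < 1 + ⟪lam, X i - θ⟫)
    (hlag : ∑ i, (1 + ⟪lam, X i - θ⟫)⁻¹ • (X i - θ) = 0) :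
    (fun i => ((n : ℝ) * (1 + ⟪lam, X i - θ⟫))⁻¹) ∈ Wset n d X θ ∧
      (∀ w ∈ Wset n d X θ,
        ∏ i, (n : ℝ) * w i ≤
          ∏ i, (n : ℝ) * ((n : ℝ) * (1 + ⟪lam, X i - θ⟫))⁻¹) ∧
      elR n d X θ = ∏ i, (1 + ⟪lam, X i - θ⟫)⁻¹ ∧
      elln n d X θ = 2 * ∑ i, Real.log (1 + ⟪lam, X i - θ⟫) := by

  classical
  have hne : (n : ℝ) ≠ 0 := Nat.cast_ne_zero.2 hn.ne'
  set g : Fin n → ℝ := fun i => ⟪lam, X i - θ⟫ with hg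
  have hpos' : ∀ i, (0:ℝ) < 1 + g i := hpos
  have hgne : ∀ i, (1 + g i) ≠ 0 := fun i => (hpos' i).ne'
  -- inner lam with hlag
  have h1 : ∑ i, (1 + g i)⁻¹ * g i = 0 := by
    have := congrArg (fun v => ⟪lam, v⟫) hlag
    simp only [inner_sum, real_inner_smul_right, inner_zero_right] at this
    exact this
  have hsum_inv : ∑ i, (1 + g i)⁻¹ = n := by
    have h2 : ∀ i, (1 + g i)⁻¹ * g i = 1 - (1 + g i)⁻¹ := by
      intro i
      calc (1 + g i)⁻¹ * g i = (1 + g i)⁻¹ * ((1 + g i) - 1) := by ring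
        _ = 1 - (1 + g i)⁻¹ := by
            rw [mul_sub, inv_mul_cancel₀ (hgne i), mul_one]
    rw [Finset.sum_congr rfl fun i _ => h2 i, Finset.sum_sub_distrib] at h1
    simp only [Finset.sum_const, Finset.card_univ, Fintype.card_fin, nsmul_eq_mul,
      mul_one, sub_eq_zero] at h1
    linarith
  -- lag sum of vectors
  have hvec : ∑ i, ((n : ℝ) * (1 + g i))⁻¹ • (X i - θ) = 0 := by
    have : ∑ i, ((n : ℝ) * (1 + g i))⁻¹ • (X i - θ)
        = (n : ℝ)⁻¹ • ∑ i, (1 + g i)⁻¹ • (X i - θ) := by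
      rw [Finset.smul_sum]
      exact Finset.sum_congr rfl fun i _ => by rw [mul_inv, smul_smul]
    rw [this, hlag, smul_zero]
  have hwsum : ∑ i, ((n : ℝ) * (1 + g i))⁻¹ = 1 := by
    have : ∑ i, ((n : ℝ) * (1 + g i))⁻¹ = (n : ℝ)⁻¹ * ∑ i, (1 + g i)⁻¹ := by
      rw [Finset.mul_sum]
      exact Finset.sum_congr rfl fun i _ => by rw [mul_inv]
    rw [this, hsum_inv, inv_mul_cancel₀ hne]
  have hmem : (fun i => ((n : ℝ) * (1 + ⟪lam, X i - θ⟫))⁻¹) ∈ Wset n d X θ := by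
    refine ⟨fun i => le_of_lt (inv_pos.2 (mul_pos (by exact_mod_cast hn) (hpos i))), hwsum, ?_⟩
    have : ∀ i, ((n : ℝ) * (1 + g i))⁻¹ • X i
        = ((n : ℝ) * (1 + g i))⁻¹ • (X i - θ) + ((n : ℝ) * (1 + g i))⁻¹ • θ := by
      intro i; rw [← smul_add, sub_add_cancel]
    rw [Finset.sum_congr rfl fun i _ => this i, Finset.sum_add_distrib, hvec,
      zero_add, ← Finset.sum_smul, hwsum, one_smul]
  -- simplify n * (n (1+g))⁻¹
  have hsimp : ∀ i, (n : ℝ) * ((n : ℝ) * (1 + g i))⁻¹ = (1 + g i)⁻¹ := by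
    intro i
    rw [mul_inv, ← mul_assoc, mul_inv_cancel₀ hne, one_mul]
  have hPpos : 0 < ∏ i, (1 + g i)⁻¹ := Finset.prod_pos fun i _ => inv_pos.2 (hpos' i)
  -- maximality
  have hmax : ∀ w ∈ Wset n d X θ,
      ∏ i, (n : ℝ) * w i ≤ ∏ i, (n : ℝ) * ((n : ℝ) * (1 + ⟪lam, X i - θ⟫))⁻¹ := by
    intro w hw
    obtain ⟨hw0, hw1, hw2⟩ := hw
    rw [Finset.prod_congr rfl fun i _ => hsimp i]
    by_cases hz : ∃ i, w i = 0
    · obtain ⟨i, hi⟩ := hz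
      have : ∏ i, (n : ℝ) * w i = 0 :=
        Finset.prod_eq_zero (Finset.mem_univ i) (by simp [hi])
      rw [this]; exact hPpos.le
    · push_neg at hz
      have hwpos : ∀ i, 0 < w i := fun i => lt_of_le_of_ne (hw0 i) (Ne.symm (hz i))
      have hwg : ∑ i, w i * g i = 0 := by
        have h3 : ∑ i, w i • (X i - θ) = 0 := by
          have : ∀ i, w i • (X i - θ) = w i • X i - w i • θ := fun i => smul_sub _ _ _
          rw [Finset.sum_congr rfl fun i _ => this i, Finset.sum_sub_distrib, hw2,
            ← Finset.sum_smul, hw1, one_smul, sub_self]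
        have := congrArg (fun v => ⟪lam, v⟫) h3
        simp only [inner_sum, real_inner_smul_right, inner_zero_right] at this
        exact this
      set a : Fin n → ℝ := fun i => (n : ℝ) * w i * (1 + g i) with ha
      have hapos : ∀ i, 0 < a i := fun i =>
        mul_pos (mul_pos (by exact_mod_cast hn) (hwpos i)) (hpos' i)
      have hasum : ∑ i, a i = n := by
        have : ∀ i, a i = (n : ℝ) * w i + (n : ℝ) * (w i * g i) := fun i => by ring
        rw [Finset.sum_congr rfl fun i _ => this i, Finset.sum_add_distrib,
          ← Finset.mul_sum, ← Finset.mul_sum, hw1, hwg, mul_one, mul_zero, add_zero]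
      have hlog : ∑ i, Real.log (a i) ≤ 0 := by
        calc ∑ i, Real.log (a i) ≤ ∑ i, (a i - 1) :=
              Finset.sum_le_sum fun i _ => Real.log_le_sub_one_of_pos (hapos i)
          _ = 0 := by
              rw [Finset.sum_sub_distrib, hasum]
              simp
      have haprod : ∏ i, a i ≤ 1 := by
        have := Real.exp_le_exp.2 hlog
        rw [Real.exp_sum, Real.exp_zero] at this
        calc ∏ i, a i = ∏ i, Real.exp (Real.log (a i)) :=
              Finset.prod_congr rfl fun i _ => (Real.exp_log (hapos i)).symm
          _ ≤ 1 := this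
      have key : ∏ i, (n : ℝ) * w i = (∏ i, a i) * ∏ i, (1 + g i)⁻¹ := by
        rw [← Finset.prod_mul_distrib]
        refine Finset.prod_congr rfl fun i _ => ?_
        show (n : ℝ) * w i = ((n : ℝ) * w i * (1 + g i)) * (1 + g i)⁻¹
        rw [mul_assoc, mul_inv_cancel₀ (hgne i), mul_one]
      rw [key]
      calc (∏ i, a i) * ∏ i, (1 + g i)⁻¹ ≤ 1 * ∏ i, (1 + g i)⁻¹ :=
            mul_le_mul_of_nonneg_right haprod hPpos.le
        _ = ∏ i, (1 + g i)⁻¹ := one_mul _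
  have helR : elR n d X θ = ∏ i, (1 + ⟪lam, X i - θ⟫)⁻¹ := by
    apply IsGreatest.csSup_eq
    constructor
    · refine ⟨_, hmem, ?_⟩
      exact Finset.prod_congr rfl fun i _ => hsimp i
    · rintro x ⟨w, hw, rfl⟩
      have := hmax w hw
      rwa [Finset.prod_congr rfl fun i _ => hsimp i] at this
  refine ⟨hmem, hmax, helR, ?_⟩
  rw [elln, helR, Real.log_prod fun i _ => inv_ne_zero (hgne i)]
  rw [Finset.sum_congr rfl fun i _ => Real.log_inv (1 + g i)]
  rw [Finset.sum_neg_distrib]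
  ring
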